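/- Let (Ω, ℙ) be a probability space, n ≥ 1, and Z : Ω → (Fin n → ℂ) a random vector whose components Zᵢ are square-integrable with E[Zᵢ] = 0 for all i. Let K i j := E[Zᵢ · conj(Zⱼ)] and C i j := E[Zᵢ · Zⱼ]. If the matrix K is invertible, then the matrix conj(K) − Cᴴ · K⁻¹ · C is positive semidefinite, where conj(K) denotes the entrywise complex conjugate of K and Cᴴ the conjugate transpose of C. -/

import Mathlib

open MeasureTheory Matrix ComplexConjugate

private lemma memLp_conj' {Ω : Type*} [MeasurableSpace Ω] {ℙ : Measure Ω}
    {f : Ω → ℂ} (hf : MemLp f 2 ℙ) : MemLp (fun ω => conj (f ω)) 2 ℙ :=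
  ⟨RCLike.continuous_conj.comp_aestronglyMeasurable hf.1, by
    simpa [← eLpNorm_norm] using hf.2⟩

private lemma int_mul' {Ω : Type*} [MeasurableSpace Ω] {ℙ : Measure Ω}
    {f g : Ω → ℂ} (hf : MemLp f 2 ℙ) (hg : MemLp g 2 ℙ) :
    Integrable (fun ω => f ω * g ω) ℙ := by
  have := hg.smul (p := 2) (q := 2) (r := 1) hf
  rw [← memLp_one_iff_integrable]
  exact this

private lemma int_expand' {Ω : Type*} [MeasurableSpace Ω] {ℙ : Measure Ω}
    (n : ℕ) (f g : Fin n → Ω → ℂ) (c d : Fin n → ℂ)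
    (hf : ∀ i, MemLp (f i) 2 ℙ) (hg : ∀ i, MemLp (g i) 2 ℙ) :
    ∫ ω, (∑ i, c i * f i ω) * (∑ j, d j * g j ω) ∂ℙ
      = ∑ i, ∑ j, c i * d j * ∫ ω, f i ω * g j ω ∂ℙ := by
  have h1 : ∀ ω, (∑ i, c i * f i ω) * (∑ j, d j * g j ω)
      = ∑ i, ∑ j, c i * d j * (f i ω * g j ω) := by
    intro ω
    rw [Finset.sum_mul_sum]
    exact Finset.sum_congr rfl fun i _ => Finset.sum_congr rfl fun j _ => by ring
  simp_rw [h1]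
  rw [integral_finset_sum _ fun i _ => integrable_finset_sum _ fun j _ =>
    ((int_mul' (hf i) (hg j)).const_mul _)]
  exact Finset.sum_congr rfl fun i _ => by
    rw [integral_finset_sum _ fun j _ => ((int_mul' (hf i) (hg j)).const_mul _)]
    exact Finset.sum_congr rfl fun j _ => integral_const_mul _ _

theorem stmt7 {Ω : Type*} [MeasurableSpace Ω] (ℙ : Measure Ω) [IsProbabilityMeasure ℙ]
    (n : ℕ) (hn : 1 ≤ n) (Z : Ω → Fin n → ℂ)
    (hL2 : ∀ i, MemLp (fun ω => Z ω i) 2 ℙ)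
    (hmean : ∀ i, ∫ ω, Z ω i ∂ℙ = 0)
    (K C : Matrix (Fin n) (Fin n) ℂ)
    (hK : ∀ i j, K i j = ∫ ω, Z ω i * conj (Z ω j) ∂ℙ)
    (hC : ∀ i j, C i j = ∫ ω, Z ω i * Z ω j ∂ℙ)
    (hKinv : IsUnit K.det) :
    ∀ x : Fin n → ℂ,
      0 ≤ (star x ⬝ᵥ (K.map (starRingEnd ℂ) - C.conjTranspose * K⁻¹ * C).mulVec x).re ∧
      (star x ⬝ᵥ (K.map (starRingEnd ℂ) - C.conjTranspose * K⁻¹ * C).mulVec x).im = 0 := by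
  intro x
  classical
  set v : Fin n → ℂ := C.mulVec x with hv
  set b : Fin n → ℂ := K⁻¹.mulVec v with hb
  -- the four building blocks
  set A : Ω → ℂ := fun ω => ∑ i, conj (x i) * conj (Z ω i) with hA
  set A' : Ω → ℂ := fun ω => ∑ i, x i * Z ω i with hA'
  set B : Ω → ℂ := fun ω => ∑ i, conj (b i) * Z ω i with hB
  set B' : Ω → ℂ := fun ω => ∑ i, b i * conj (Z ω i) with hB'
  set R : Ω → ℂ := fun ω => A ω - B ω with hR
  have hZc : ∀ i, MemLp (fun ω => conj (Z ω i)) 2 ℙ := fun i => memLp_conj' (hL2 i)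
  have hAm : MemLp A 2 ℙ := by
    rw [hA]; exact memLp_finset_sum _ fun i _ => (hZc i).const_mul _
  have hA'm : MemLp A' 2 ℙ := by
    rw [hA']; exact memLp_finset_sum _ fun i _ => (hL2 i).const_mul _
  have hBm : MemLp B 2 ℙ := by
    rw [hB]; exact memLp_finset_sum _ fun i _ => (hL2 i).const_mul _
  have hB'm : MemLp B' 2 ℙ := by
    rw [hB']; exact memLp_finset_sum _ fun i _ => (hZc i).const_mul _
  -- conj of R
  have hRconj : ∀ ω, conj (R ω) = A' ω - B' ω := by
    intro ω
    simp only [hR, hA, hA', hB, hB', map_sub, map_sum, _root_.map_mul,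
      RingHomCompTriple.comp_apply, RingHom.id_apply, Complex.conj_conj]
  -- symmetry of C
  have hCsymm : ∀ i j, C i j = C j i := by
    intro i j; rw [hC, hC]; simp_rw [mul_comm]
  -- K · b = v
  have hKb : K.mulVec b = v := by
    rw [hb, mulVec_mulVec, Matrix.mul_nonsing_inv K hKinv, one_mulVec]
  -- the four integrals
  have hI1 : ∫ ω, A ω * A' ω ∂ℙ
      = ∑ i, ∑ j, conj (x i) * x j * ∫ ω, conj (Z ω i) * Z ω j ∂ℙ := by
    rw [hA, hA']
    exact int_expand' n _ _ _ _ hZc hL2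
  have hI2 : ∫ ω, A ω * B' ω ∂ℙ = conj (star b ⬝ᵥ v) := by
    rw [hA, hB', int_expand' n _ _ _ _ hZc hZc]
    have e : ∀ i j, (∫ ω, conj (Z ω i) * conj (Z ω j) ∂ℙ) = conj (C i j) := by
      intro i j
      rw [hC, ← integral_conj]
      simp_rw [_root_.map_mul]
    simp_rw [e]
    rw [hv]
    simp only [dotProduct, mulVec, dotProduct, Pi.star_apply, RCLike.star_def,
      map_sum, _root_.map_mul, Complex.conj_conj, Finset.mul_sum]
    rw [Finset.sum_comm]
    exact Finset.sum_congr rfl fun i _ => Finset.sum_congr rfl fun j _ => by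
      rw [hCsymm j i]; ring
  have hI3 : ∫ ω, B ω * A' ω ∂ℙ = star b ⬝ᵥ v := by
    rw [hB, hA', int_expand' n _ _ _ _ hL2 hL2]
    simp_rw [fun i j => (hC i j).symm]
    rw [hv]
    simp only [dotProduct, mulVec, dotProduct, Pi.star_apply, RCLike.star_def,
      Finset.mul_sum]
    exact Finset.sum_congr rfl fun i _ => Finset.sum_congr rfl fun j _ => by ring
  have hI4 : ∫ ω, B ω * B' ω ∂ℙ = star b ⬝ᵥ v := by
    rw [hB, hB', int_expand' n _ _ _ _ hL2 hZc]
    simp_rw [fun i j => (hK i j).symm]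
    rw [← hKb]
    simp only [dotProduct, mulVec, dotProduct, Pi.star_apply, RCLike.star_def,
      Finset.mul_sum]
    exact Finset.sum_congr rfl fun i _ => Finset.sum_congr rfl fun j _ => by ring
  -- the integral of |R|²
  have key : star x ⬝ᵥ (K.map (starRingEnd ℂ) - C.conjTranspose * K⁻¹ * C).mulVec x
      = ∫ ω, R ω * conj (R ω) ∂ℙ := by
    have e1 : ∀ ω, R ω * conj (R ω)
        = (A ω * A' ω - A ω * B' ω) - (B ω * A' ω - B ω * B' ω) := by
      intro ω; rw [hRconj]; simp only [hR]; ring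
    have iAA' := int_mul' hAm hA'm
    have iAB' := int_mul' hAm hB'm
    have iBA' := int_mul' hBm hA'm
    have iBB' := int_mul' hBm hB'm
    have e2 : ∫ ω, R ω * conj (R ω) ∂ℙ
        = ((∫ ω, A ω * A' ω ∂ℙ) - ∫ ω, A ω * B' ω ∂ℙ)
          - ((∫ ω, B ω * A' ω ∂ℙ) - ∫ ω, B ω * B' ω ∂ℙ) := by
      have iD1 : Integrable (fun ω => A ω * A' ω - A ω * B' ω) ℙ := iAA'.sub iAB'
      have iD2 : Integrable (fun ω => B ω * A' ω - B ω * B' ω) ℙ := iBA'.sub iBB'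
      simp_rw [e1]
      rw [integral_sub iD1 iD2, integral_sub iAA' iAB', integral_sub iBA' iBB']
    rw [e2, hI1, hI2, hI3, hI4]
    -- now the matrix side
    have hmv : (K.map (starRingEnd ℂ) - C.conjTranspose * K⁻¹ * C).mulVec x
        = (K.map (starRingEnd ℂ)).mulVec x - (C.conjTranspose * K⁻¹ * C).mulVec x := by
      rw [sub_mulVec]
    rw [hmv, dotProduct_sub]
    have hterm1 : star x ⬝ᵥ (K.map (starRingEnd ℂ)).mulVec x
        = ∑ i, ∑ j, conj (x i) * x j * ∫ ω, conj (Z ω i) * Z ω j ∂ℙ := by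
      have e : ∀ i j, conj (K i j) = ∫ ω, conj (Z ω i) * Z ω j ∂ℙ := by
        intro i j
        rw [hK i j, ← integral_conj]
        simp_rw [_root_.map_mul, Complex.conj_conj]
      simp only [dotProduct, mulVec, dotProduct, Pi.star_apply, RCLike.star_def,
        Matrix.map_apply, Finset.mul_sum]
      exact Finset.sum_congr rfl fun i _ => Finset.sum_congr rfl fun j _ => by
        rw [e i j]; ring
    have hterm2 : star x ⬝ᵥ (C.conjTranspose * K⁻¹ * C).mulVec x = star v ⬝ᵥ b := by
      rw [← mulVec_mulVec, ← mulVec_mulVec, ← hv, ← hb, dotProduct_mulVec,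
        ← star_mulVec, ← hv]
    have hconjs : conj (star b ⬝ᵥ v) = star v ⬝ᵥ b := by
      simp only [dotProduct, Pi.star_apply, RCLike.star_def, map_sum, _root_.map_mul,
        Complex.conj_conj]
      exact Finset.sum_congr rfl fun i _ => by ring
    rw [hterm1, hterm2, ← hconjs]
    ring
  rw [key]
  have hfin : ∫ ω, R ω * conj (R ω) ∂ℙ
      = ((∫ ω, Complex.normSq (R ω) ∂ℙ : ℝ) : ℂ) := by
    simp_rw [Complex.mul_conj]
    exact integral_ofReal
  rw [hfin]
  refine ⟨?_, by simp⟩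
  simp only [Complex.ofReal_re]
  exact integral_nonneg fun ω => Complex.normSq_nonneg _
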